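/- arXiv:2109.01070 — 2 statements merged into one kernel-verified Lean document; each statement's English description precedes it below -/
import Mathlib

section
/- For every r > 0 and every δ with 0 < δ < 1 there exists a function η : ℝ → ℝ such that: η is nonincreasing and Lipschitz, 0 ≤ η ≤ 1 everywhere, η(s) = 1 for all s ≤ r², η(s) = 0 for all s ≥ 4r², η is differentiable on the open interval (r², 4r²), and |η′(s)| ≤ (1/(3δr²))·η(s)^{1−δ} for every s ∈ (r², 4r²). -/
/-- For every `r > 0` and `0 < δ < 1` there is a function `η : ℝ → ℝ` that is
nonincreasing and Lipschitz, satisfies `0 ≤ η ≤ 1`, equals `1` on `(-∞, r²]`,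
vanishes on `[4r², ∞)`, is differentiable on `(r², 4r²)`, and satisfies
`|η′(s)| ≤ (1/(3δr²)) · η(s)^(1-δ)` for all `s ∈ (r², 4r²)`. -/
theorem exists_cutoff_function (r δ : ℝ) (hr : 0 < r) (hδ0 : 0 < δ) (hδ1 : δ < 1) :
    ∃ η : ℝ → ℝ,
      Antitone η ∧
      (∃ L : NNReal, LipschitzWith L η) ∧
      (∀ s, 0 ≤ η s ∧ η s ≤ 1) ∧
      (∀ s, s ≤ r ^ 2 → η s = 1) ∧
      (∀ s, 4 * r ^ 2 ≤ s → η s = 0) ∧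
      DifferentiableOn ℝ η (Set.Ioo (r ^ 2) (4 * r ^ 2)) ∧
      (∀ s ∈ Set.Ioo (r ^ 2) (4 * r ^ 2),
        |deriv η s| ≤ 1 / (3 * δ * r ^ 2) * (η s) ^ (1 - δ)) := by
  set c : ℝ := 3 * r ^ 2 with hc_def
  have hc : (0:ℝ) < c := by positivity
  set p : ℝ := 1 / δ with hp_def
  have hp1 : 1 < p := by
    rw [hp_def]
    rw [lt_div_iff₀ hδ0]; linarith
  have hp0 : 0 < p := lt_trans one_pos hp1
  -- the linear function
  set t : ℝ → ℝ := fun s => (4 * r ^ 2 - s) / c with ht_def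
  -- the clamp of t
  set u : ℝ → ℝ := fun s => min 1 (max (t s) 0) with hu_def
  have hu0 : ∀ s, 0 ≤ u s := fun s => le_min zero_le_one (le_max_right _ _)
  have hu1 : ∀ s, u s ≤ 1 := fun s => min_le_left _ _
  set η : ℝ → ℝ := fun s => u s ^ p with hη_def
  have hu_anti : Antitone u := by
    intro a b hab
    exact min_le_min le_rfl (max_le_max ((div_le_div_iff_of_pos_right hc).mpr (by linarith)) le_rfl)
  -- on the interval, u = t and t ∈ (0,1)
  have hmem : ∀ s ∈ Set.Ioo (r ^ 2) (4 * r ^ 2), 0 < t s ∧ t s < 1 := by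
    intro s hs
    constructor
    · exact div_pos (by linarith [hs.2]) hc
    · rw [div_lt_one hc]; linarith [hs.1]
  have hueq : ∀ s ∈ Set.Ioo (r ^ 2) (4 * r ^ 2), u s = t s := by
    intro s hs
    obtain ⟨h0, h1⟩ := hmem s hs
    simp only [hu_def]
    rw [max_eq_left h0.le, min_eq_right h1.le]
  have hηeq : Set.EqOn η (fun s => t s ^ p) (Set.Ioo (r ^ 2) (4 * r ^ 2)) := by
    intro s hs
    simp only [hη_def]
    rw [hueq s hs]
  -- derivative of t
  have ht_deriv : ∀ s : ℝ, HasDerivAt t (-c⁻¹) s := by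
    intro s
    have : HasDerivAt (fun s : ℝ => 4 * r ^ 2 - s) (0 - 1) s :=
      (hasDerivAt_const s (4 * r ^ 2)).sub (hasDerivAt_id s)
    simpa [ht_def, div_eq_mul_inv, sub_zero] using this.div_const c
  have hg_deriv : ∀ s ∈ Set.Ioo (r ^ 2) (4 * r ^ 2),
      HasDerivAt (fun s => t s ^ p) (-c⁻¹ * p * t s ^ (p - 1)) s := by
    intro s hs
    exact (ht_deriv s).rpow_const (Or.inl (hmem s hs).1.ne')
  refine ⟨η, ?_, ?_, ?_, ?_, ?_, ?_, ?_⟩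
  · -- Antitone
    intro a b hab
    exact Real.rpow_le_rpow (hu0 b) (hu_anti hab) hp0.le
  · -- Lipschitz
    -- outer: x ↦ x ^ p on [0,1] with constant p
    have houter : LipschitzOnWith p.toNNReal (fun x : ℝ => x ^ p) (Set.Icc 0 1) := by
      apply (convex_Icc (0:ℝ) 1).lipschitzOnWith_of_nnnorm_deriv_le
      · intro x _
        exact (Real.hasDerivAt_rpow_const (Or.inr hp1.le)).differentiableAt
      · intro x hx
        rw [Real.deriv_rpow_const]
        rw [← NNReal.coe_le_coe, coe_nnnorm, Real.coe_toNNReal _ hp0.le, Real.norm_eq_abs]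
        rw [abs_mul, abs_of_pos hp0]
        have : |x ^ (p - 1)| ≤ 1 := by
          rw [abs_of_nonneg (Real.rpow_nonneg hx.1 _)]
          exact Real.rpow_le_one hx.1 hx.2 (by linarith)
        nlinarith [hp0]
    have hinner : LipschitzWith (c⁻¹).toNNReal u := by
      have ht_lip : LipschitzWith (c⁻¹).toNNReal t := by
        apply LipschitzWith.of_dist_le_mul
        intro a b
        simp only [ht_def, Real.dist_eq, Real.coe_toNNReal _ (inv_nonneg.mpr hc.le)]
        rw [div_sub_div_same, show 4 * r ^ 2 - a - (4 * r ^ 2 - b) = b - a from by ring,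
          abs_div, abs_of_pos hc, abs_sub_comm, div_eq_inv_mul]
      exact (ht_lip.max_const 0).const_min 1
    have hmaps : Set.MapsTo u Set.univ (Set.Icc 0 1) := fun s _ => ⟨hu0 s, hu1 s⟩
    refine ⟨p.toNNReal * (c⁻¹).toNNReal, ?_⟩
    have := houter.comp (lipschitzOnWith_univ.mpr hinner) hmaps
    rw [lipschitzOnWith_univ] at this
    exact this
  · -- bounds
    intro s
    exact ⟨Real.rpow_nonneg (hu0 s) _, Real.rpow_le_one (hu0 s) (hu1 s) hp0.le⟩
  · -- = 1 for s ≤ r²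
    intro s hs
    have h1 : (1:ℝ) ≤ t s := by
      rw [le_div_iff₀ hc]; simp only [hc_def]; linarith
    have : u s = 1 := by
      simp only [hu_def]
      rw [min_eq_left (le_max_of_le_left h1)]
    simp only [hη_def, this, Real.one_rpow]
  · -- = 0 for s ≥ 4r²
    intro s hs
    have h0 : t s ≤ 0 := div_nonpos_iff.mpr (Or.inr ⟨by linarith, hc.le⟩)
    have : u s = 0 := by
      simp only [hu_def]
      rw [max_eq_right h0, min_eq_right zero_le_one]
    simp only [hη_def, this, Real.zero_rpow hp0.ne']
  · -- differentiability
    apply DifferentiableOn.congr _ hηeq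
    intro s hs
    exact ((hg_deriv s hs).differentiableAt).differentiableWithinAt
  · -- derivative bound
    intro s hs
    obtain ⟨ht0, ht1⟩ := hmem s hs
    have hd : deriv η s = -c⁻¹ * p * t s ^ (p - 1) := by
      have hev : η =ᶠ[nhds s] fun s => t s ^ p :=
        Filter.eventuallyEq_of_mem (isOpen_Ioo.mem_nhds hs) hηeq
      rw [hev.deriv_eq]
      exact (hg_deriv s hs).deriv
    rw [hd]
    have hηs : η s = t s ^ p := hηeq hs
    rw [hηs, ← Real.rpow_mul ht0.le]
    have hexp : p * (1 - δ) = p - 1 := by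
      rw [hp_def]; field_simp
    rw [hexp, abs_mul, abs_mul, abs_neg, abs_of_nonneg (inv_nonneg.mpr hc.le),
      abs_of_pos hp0, abs_of_nonneg (Real.rpow_nonneg ht0.le _)]
    have hcoef : c⁻¹ * p = 1 / (3 * δ * r ^ 2) := by
      rw [hc_def, hp_def]; field_simp
    rw [hcoef]
end

section
/- Let μ be a measure on a measurable space X, let f, g : X → ℝ be measurable with f ≥ 0 and g ≥ 0, and let b > 0. Assume that ∫_X g·e^{−f} dμ < ∞ and that ∫_X f·g·e^{−f} dμ ≤ 2b·∫_X g·e^{−f} dμ. Then for every r > 0, ∫_{{x : f(x) ≤ r²}} g dμ ≤ (2e^{r²} + 1)·∫_{{x : f(x) ≤ 3b}} g dμ, where integrals of nonnegative functions are taken in [0, ∞]. -/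
open MeasureTheory
open scoped ENNReal

/-- Measure-theoretic core of the energy bound: if `f, g ≥ 0` are measurable,
`∫ g e^{-f} dμ < ∞` and `∫ f g e^{-f} dμ ≤ 2b ∫ g e^{-f} dμ` for some `b > 0`,
then for every `r > 0`,
`∫_{f ≤ r²} g dμ ≤ (2e^{r²} + 1) ∫_{f ≤ 3b} g dμ`. Integrals of nonnegative
functions are taken in `[0, ∞]`. -/
theorem local_to_global_energy_bound
    {X : Type*} [MeasurableSpace X] (μ : Measure X)
    (f g : X → ℝ) (hf : Measurable f) (hg : Measurable g)
    (hf0 : ∀ x, 0 ≤ f x) (hg0 : ∀ x, 0 ≤ g x) (b : ℝ) (hb : 0 < b)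
    (hfin : ∫⁻ x, ENNReal.ofReal (g x * Real.exp (-f x)) ∂μ < ⊤)
    (hineq : ∫⁻ x, ENNReal.ofReal (f x * g x * Real.exp (-f x)) ∂μ ≤
      ENNReal.ofReal (2 * b) * ∫⁻ x, ENNReal.ofReal (g x * Real.exp (-f x)) ∂μ) :
    ∀ r : ℝ, 0 < r →
      ∫⁻ x in {x | f x ≤ r ^ 2}, ENNReal.ofReal (g x) ∂μ ≤
        ENNReal.ofReal (2 * Real.exp (r ^ 2) + 1) *
          ∫⁻ x in {x | f x ≤ 3 * b}, ENNReal.ofReal (g x) ∂μ := by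
  intro r hr
  have hmeas : Measurable fun x => ENNReal.ofReal (g x * Real.exp (-f x)) :=
    (hg.mul (hf.neg).exp).ennreal_ofReal
  have hmeasJ : Measurable fun x => ENNReal.ofReal (f x * g x * Real.exp (-f x)) :=
    ((hf.mul hg).mul (hf.neg).exp).ennreal_ofReal
  set s : Set X := {x | f x ≤ 3 * b} with hs
  have hsm : MeasurableSet s := hf measurableSet_Iic
  set A := ∫⁻ x in s, ENNReal.ofReal (g x * Real.exp (-f x)) ∂μ with hA
  set B := ∫⁻ x in sᶜ, ENNReal.ofReal (g x * Real.exp (-f x)) ∂μ with hB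
  have hIAB : A + B = ∫⁻ x, ENNReal.ofReal (g x * Real.exp (-f x)) ∂μ :=
    lintegral_add_compl _ hsm
  have hBfin : B ≠ ⊤ := (lt_of_le_of_lt (setLIntegral_le_lintegral _ _) hfin).ne
  -- 3b · B ≤ ∫ f g e^{-f}
  have h3B : ENNReal.ofReal (3 * b) * B ≤
      ∫⁻ x, ENNReal.ofReal (f x * g x * Real.exp (-f x)) ∂μ := by
    calc ENNReal.ofReal (3 * b) * B
        = ∫⁻ x in sᶜ, ENNReal.ofReal (3 * b) * ENNReal.ofReal (g x * Real.exp (-f x)) ∂μ :=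
          (lintegral_const_mul _ hmeas).symm
      _ ≤ ∫⁻ x in sᶜ, ENNReal.ofReal (f x * g x * Real.exp (-f x)) ∂μ := by
          apply setLIntegral_mono hmeasJ
          intro x hx
          rw [← ENNReal.ofReal_mul (by positivity)]
          apply ENNReal.ofReal_le_ofReal
          have hx' : 3 * b ≤ f x := le_of_lt (not_le.mp hx)
          nlinarith [mul_le_mul_of_nonneg_right hx'
            (mul_nonneg (hg0 x) (Real.exp_pos (-f x)).le)]
      _ ≤ _ := setLIntegral_le_lintegral _ _
  have key : ENNReal.ofReal (3 * b) * B ≤ ENNReal.ofReal (2 * b) * (A + B) := by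
    rw [hIAB]; exact h3B.trans hineq
  have hB2A : B ≤ 2 * A := by
    have h1 : ENNReal.ofReal (3 * b) = ENNReal.ofReal b + ENNReal.ofReal (2 * b) := by
      rw [← ENNReal.ofReal_add hb.le (by positivity)]; ring_nf
    have h2bB : ENNReal.ofReal (2 * b) * B ≠ ⊤ :=
      ENNReal.mul_ne_top ENNReal.ofReal_ne_top hBfin
    have h2 : ENNReal.ofReal b * B ≤ ENNReal.ofReal (2 * b) * A := by
      rw [h1, add_mul, mul_add] at key
      rw [add_comm (ENNReal.ofReal b * B)] at key
      rw [add_comm (ENNReal.ofReal (2 * b) * A)] at key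
      exact (ENNReal.add_le_add_iff_left h2bB).mp key
    have h3 : ENNReal.ofReal (2 * b) * A = ENNReal.ofReal b * (2 * A) := by
      rw [ENNReal.ofReal_mul (by norm_num)]
      rw [show ENNReal.ofReal (2:ℝ) = 2 by simp [ENNReal.ofReal_ofNat]]
      ring
    rw [h3] at h2
    exact (ENNReal.mul_le_mul_iff_right (by simpa using hb) ENNReal.ofReal_ne_top).mp h2
  have hI3A : A + B ≤ 3 * A := by
    calc A + B ≤ A + 2 * A := by gcongr
      _ = 3 * A := by ring
  set t : Set X := {x | f x ≤ r ^ 2} with ht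
  set E := ∫⁻ x in s, ENNReal.ofReal (g x) ∂μ with hE
  have hA' : A ≤ E := by
    apply setLIntegral_mono hg.ennreal_ofReal
    intro x _
    apply ENNReal.ofReal_le_ofReal
    calc g x * Real.exp (-f x) ≤ g x * 1 := by
          apply mul_le_mul_of_nonneg_left _ (hg0 x)
          exact Real.exp_le_one_iff.mpr (by simpa using hf0 x)
      _ = g x := mul_one _
  have hsplit : ∫⁻ x in t, ENNReal.ofReal (g x) ∂μ =
      (∫⁻ x in s ∩ t, ENNReal.ofReal (g x) ∂μ) +
        ∫⁻ x in sᶜ ∩ t, ENNReal.ofReal (g x) ∂μ := by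
    rw [← Measure.restrict_restrict hsm, ← Measure.restrict_restrict hsm.compl]
    exact (lintegral_add_compl _ hsm).symm
  have h1 : ∫⁻ x in s ∩ t, ENNReal.ofReal (g x) ∂μ ≤ E :=
    lintegral_mono_set Set.inter_subset_left
  have h2 : ∫⁻ x in sᶜ ∩ t, ENNReal.ofReal (g x) ∂μ ≤
      ENNReal.ofReal (2 * Real.exp (r ^ 2)) * E := by
    calc ∫⁻ x in sᶜ ∩ t, ENNReal.ofReal (g x) ∂μ
        ≤ ∫⁻ x in sᶜ ∩ t,
            ENNReal.ofReal (Real.exp (r ^ 2)) * ENNReal.ofReal (g x * Real.exp (-f x)) ∂μ := by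
          apply setLIntegral_mono (measurable_const.mul hmeas)
          intro x hx
          simp only [Pi.mul_apply]
          rw [← ENNReal.ofReal_mul (Real.exp_pos _).le]
          apply ENNReal.ofReal_le_ofReal
          have hx2 : f x ≤ r ^ 2 := hx.2
          have h1' : (1 : ℝ) ≤ Real.exp (r ^ 2) * Real.exp (-f x) := by
            rw [← Real.exp_add]
            exact Real.one_le_exp (by linarith)
          nlinarith [hg0 x]
      _ = ENNReal.ofReal (Real.exp (r ^ 2)) *
            ∫⁻ x in sᶜ ∩ t, ENNReal.ofReal (g x * Real.exp (-f x)) ∂μ :=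
          lintegral_const_mul _ hmeas
      _ ≤ ENNReal.ofReal (Real.exp (r ^ 2)) * B := by
          gcongr
          exact lintegral_mono_set Set.inter_subset_left
      _ ≤ ENNReal.ofReal (Real.exp (r ^ 2)) * (2 * E) := by
          gcongr
          exact hB2A.trans (by gcongr)
      _ = ENNReal.ofReal (2 * Real.exp (r ^ 2)) * E := by
          rw [ENNReal.ofReal_mul (by norm_num),
            show ENNReal.ofReal (2 : ℝ) = 2 by norm_num]
          ring
  calc ∫⁻ x in t, ENNReal.ofReal (g x) ∂μ
      = (∫⁻ x in s ∩ t, ENNReal.ofReal (g x) ∂μ) +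
          ∫⁻ x in sᶜ ∩ t, ENNReal.ofReal (g x) ∂μ := hsplit
    _ ≤ E + ENNReal.ofReal (2 * Real.exp (r ^ 2)) * E := add_le_add h1 h2
    _ = ENNReal.ofReal (2 * Real.exp (r ^ 2) + 1) * E := by
        rw [ENNReal.ofReal_add (by positivity) zero_le_one, ENNReal.ofReal_one,
          add_mul, one_mul, add_comm]
end
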